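/- In any bad Delannoy path W = w_1...w_l from (0,0) to (n,n), the first step w_k of maximal depth satisfies: w_k = N; the first non-D step after position k (if it exists) is E; and the last non-D step before position k (if it exists) is N. -/

import Mathlib

inductive Step : Type
  | E | D | N
deriving DecidableEq

instance : Fintype Step :=
  ⟨{Step.E, Step.D, Step.N}, fun x => by cases x <;> simp⟩

open Step Polynomial

/-- All words of length `l` over the step alphabet. -/
def Words (l : ℕ) : Finset (List Step) :=
  (Finset.univ : Finset (Fin l → Step)).image List.ofFn

/-- Delannoy paths from (0,0) to (m,n) with `l` steps, encoded as words:
`#E + #D = m`, `#N + #D = n`, length `l`. -/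
def DelSet (m n l : ℕ) : Finset (List Step) :=
  (Words l).filter fun w => w.count E + w.count D = m ∧ w.count N + w.count D = n

/-- A word is bad if some prefix contains more N's than E's. -/
def bad (w : List Step) : Bool :=
  (List.range (w.length + 1)).any fun k => (w.take k).count E < (w.take k).count N

/-- Bad Delannoy paths from (0,0) to (n,n) with `l` steps. -/
def BDelSet (n l : ℕ) : Finset (List Step) :=
  (DelSet n n l).filter fun w => bad w

/-- Schröder paths: Delannoy paths to (n,n) never going above the diagonal. -/
def SchSet (n l : ℕ) : Finset (List Step) :=
  (DelSet n n l).filter fun w => ¬ bad w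

/-- Major index of a word w_1 ⋯ w_l with respect to a ranking of the letters:
the sum of all positions i (1 ≤ i ≤ l-1) with w_i > w_{i+1}. -/
def maj (rank : Step → ℕ) (w : List Step) : ℕ :=
  ∑ i ∈ Finset.range (w.length - 1),
    if rank (w.getD (i + 1) E) < rank (w.getD i E) then i + 1 else 0

/-- q-integer [m] = 1 + q + ⋯ + q^{m-1}. -/
noncomputable def qint (m : ℕ) : Polynomial ℚ :=
  ∑ i ∈ Finset.range m, X ^ i

/-- q-factorial. -/
noncomputable def qfact : ℕ → Polynomial ℚ
  | 0 => 1
  | m + 1 => qfact m * qint (m + 1)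

/-- Gaussian binomial coefficient, via the q-Pascal recurrence. -/
noncomputable def qbinom : ℕ → ℕ → Polynomial ℚ
  | _, 0 => 1
  | 0, _ + 1 => 0
  | m + 1, k + 1 => qbinom m k + X ^ (k + 1) * qbinom m (k + 1)

/-- q-trinomial coefficient [l]!/([a]![b]![c]!), defined when a+b+c = l. -/
noncomputable def qbinom3 (l a b c : ℕ) : Polynomial ℚ :=
  if a + b + c = l then qbinom l a * qbinom (l - a) b else 0

/-- Depth after the first `i` steps: #N − #E. -/
def depth (w : List Step) (i : ℕ) : ℤ :=
  ((w.take i).count N : ℤ) - (w.take i).count E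

/-- `k` (0 ≤ k ≤ l) achieves the maximal running depth. -/
def isMaxDepth (w : List Step) (k : ℕ) : Bool :=
  (List.range (w.length + 1)).all fun i => decide (depth w i ≤ depth w k)

/-- The first index (number of steps) at which the running depth is maximal. -/
def firstDeep (w : List Step) : ℕ :=
  (List.range (w.length + 1)).findIdx (isMaxDepth w)

/-- The last index at which the running depth is maximal. -/
def lastDeep (w : List Step) : ℕ :=
  w.length - (List.range (w.length + 1)).reverse.findIdx (isMaxDepth w)

/-- Replace the first deepest step (the step w_k, k = firstDeep) with E. -/
def phi (w : List Step) : List Step := w.set (firstDeep w - 1) E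

/-- Replace the step following the last deepest point with N. -/
def phiInv (w : List Step) : List Step := w.set (lastDeep w) N

/-- Number of consecutive D's immediately after the first deepest step. -/
def runS (w : List Step) : ℕ := ((w.drop (firstDeep w)).takeWhile (· == D)).length

/-- Number of consecutive D's immediately before the first deepest step. -/
def runR (w : List Step) : ℕ :=
  ((w.take (firstDeep w - 1)).reverse.takeWhile (· == D)).length

/-- The window map: replace W₁ = D^r w_k D^s by D^{r-1} E D^{s+1} if r ≥ 1,
and by D^s E if r = 0. -/
def phiWin (w : List Step) : List Step :=
  let k := firstDeep w - 1
  let r := runR w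
  let s := runS w
  let seg : List Step :=
    if 1 ≤ r then List.replicate (r - 1) D ++ [E] ++ List.replicate (s + 1) D
    else List.replicate s D ++ [E]
  w.take (k - r) ++ seg ++ w.drop (k + s + 1)

/-- 0-based index of the first step after which the path is above the diagonal. -/
def firstAbove (w : List Step) : ℕ :=
  (List.range w.length).findIdx fun i =>
    decide ((w.take (i + 1)).count E < (w.take (i + 1)).count N)

/-- The map ψ of Bonin–Shapiro–Simion: replace with E the last N of the maximal
run of consecutive N's beginning at the first step going above the diagonal. -/
def psi (w : List Step) : List Step :=
  let i := firstAbove w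
  let j := i + ((w.drop i).takeWhile (· == N)).length - 1
  w.set j E


lemma length_of_mem_words {l : ℕ} {w : List Step} (h : w ∈ Words l) : w.length = l := by
  simp only [Words, Finset.mem_image] at h
  obtain ⟨f, -, rfl⟩ := h
  simp

lemma isMaxDepth_iff {w : List Step} {k : ℕ} :
    isMaxDepth w k = true ↔ ∀ i ≤ w.length, depth w i ≤ depth w k := by
  simp [isMaxDepth, List.all_eq_true, List.mem_range, Nat.lt_succ_iff]

lemma depth_succ (w : List Step) (i : ℕ) (h : i < w.length) :
    depth w (i+1) = depth w i + (match w.getD i E with | N => 1 | E => -1 | D => 0) := by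
  unfold depth
  rw [List.take_succ]
  have h2 : w[i]? = some (w.getD i E) := by
    rw [List.getD_eq_getElem _ _ h]; exact List.getElem?_eq_getElem h
  rw [h2]
  cases hh : w.getD i E <;> simp [List.count_append, hh] <;> ring

lemma exists_maxDepth (w : List Step) : ∃ k ≤ w.length, isMaxDepth w k = true := by
  obtain ⟨k, hk, hmax⟩ := Finset.exists_max_image (Finset.range (w.length+1)) (depth w) ⟨0, by simp⟩
  exact ⟨k, by simpa [Nat.lt_succ_iff] using hk,
    isMaxDepth_iff.mpr fun i hi => hmax i (Finset.mem_range.mpr (Nat.lt_succ_of_le hi))⟩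

lemma firstDeep_lt (w : List Step) :
    firstDeep w < (List.range (w.length + 1)).length := by
  obtain ⟨k, hk, hmk⟩ := exists_maxDepth w
  exact List.findIdx_lt_length_of_exists ⟨k, List.mem_range.mpr (Nat.lt_succ_of_le hk), hmk⟩

lemma firstDeep_le (w : List Step) : firstDeep w ≤ w.length := by
  have := firstDeep_lt w
  simpa [Nat.lt_succ_iff] using this

lemma firstDeep_isMax (w : List Step) : isMaxDepth w (firstDeep w) = true := by
  have h := List.findIdx_getElem (w := firstDeep_lt w) (p := isMaxDepth w)
  convert h using 2
  exact (List.getElem_range (firstDeep_lt w)).symm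

lemma firstDeep_min (w : List Step) {i : ℕ} (hi : i < firstDeep w) :
    isMaxDepth w i = false := by
  have h := List.not_of_lt_findIdx (p := isMaxDepth w) (xs := List.range (w.length+1)) (i := i) hi
  simpa [List.getElem_range] using h

lemma depth_const (w : List Step) (a b : ℕ) (hab : a ≤ b) (hb : b ≤ w.length)
    (h : ∀ i, a ≤ i → i < b → w.getD i E = D) : depth w b = depth w a := by
  induction b with
  | zero => rw [Nat.le_zero.mp hab]
  | succ m ih =>
    rcases Nat.eq_or_lt_of_le hab with rfl | hlt
    · rfl
    · have hm : a ≤ m := by omega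
      have : depth w m = depth w a := ih hm (by omega) (fun i hi1 hi2 => h i hi1 (by omega))
      rw [depth_succ w m (by omega), h m hm (by omega), this]
      simp

/-- in a bad path, the first deepest step w_k is an N; the first
non-D step after position k (if any) is an E; and the last non-D step before
position k (if any) is an N.  (Indices are 1-based; w_j is `w.getD (j-1) E`.) -/
theorem firstDeep_structure (n l : ℕ) (w : List Step) (hw : w ∈ BDelSet n l) :
    w.getD (firstDeep w - 1) E = N ∧
      (∀ j, firstDeep w < j → j ≤ l → w.getD (j - 1) E ≠ D →
        (∀ i, firstDeep w < i → i < j → w.getD (i - 1) E = D) → w.getD (j - 1) E = E) ∧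
      (∀ j, 1 ≤ j → j < firstDeep w → w.getD (j - 1) E ≠ D →
        (∀ i, j < i → i < firstDeep w → w.getD (i - 1) E = D) → w.getD (j - 1) E = N) :=  by
  rw [BDelSet, Finset.mem_filter] at hw
  obtain ⟨hw1, hbad⟩ := hw
  rw [DelSet, Finset.mem_filter] at hw1
  have hlen : w.length = l := length_of_mem_words hw1.1
  set k := firstDeep w with hkdef
  have hkle : k ≤ l := hlen ▸ firstDeep_le w
  have hmax : ∀ i ≤ l, depth w i ≤ depth w k := by
    have := isMaxDepth_iff.mp (firstDeep_isMax w); rwa [hlen] at this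
  have hpos : 0 < depth w k := by
    simp only [bad, List.any_eq_true, List.mem_range, decide_eq_true_eq] at hbad
    obtain ⟨m, hm, hlt⟩ := hbad
    have h1 : 0 < depth w m := by unfold depth; omega
    exact lt_of_lt_of_le h1 (hmax m (by omega))
  have hk1 : 1 ≤ k := by
    by_contra h
    have hk0 : k = 0 := by omega
    rw [hk0] at hpos
    simp [depth] at hpos
  have hnot := firstDeep_min w (show k - 1 < k by omega)
  have hstrict : depth w (k-1) < depth w k := by
    by_contra h
    push_neg at h
    have : isMaxDepth w (k-1) = true :=
      isMaxDepth_iff.mpr (fun i hi => le_trans (hmax i (hlen ▸ hi)) h)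
    rw [this] at hnot; exact absurd hnot (by simp)
  have hstepk := depth_succ w (k-1) (by omega)
  rw [Nat.sub_add_cancel hk1] at hstepk
  have hA : w.getD (k - 1) E = N := by
    cases hcase : w.getD (k-1) E
    · exfalso; rw [hcase] at hstepk; simp at hstepk; omega
    · exfalso; rw [hcase] at hstepk; simp at hstepk; omega
    · rfl
  rw [hA] at hstepk
  simp at hstepk
  refine ⟨hA, ?_, ?_⟩
  · intro j hj1 hj2 hne hD
    have hconst : depth w (j-1) = depth w k :=
      depth_const w k (j-1) (by omega) (by omega)
        (fun i hi1 hi2 => by simpa using hD (i+1) (by omega) (by omega))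
    have hstep := depth_succ w (j-1) (by omega)
    rw [Nat.sub_add_cancel (show 1 ≤ j by omega)] at hstep
    cases hcase : w.getD (j-1) E
    · rfl
    · exact absurd hcase hne
    · exfalso
      rw [hcase] at hstep; simp at hstep
      have := hmax j hj2
      omega
  · intro j hj1 hj2 hne hD
    have hconst : depth w (k-1) = depth w j :=
      depth_const w j (k-1) (by omega) (by omega)
        (fun i hi1 hi2 => by simpa using hD (i+1) (by omega) (by omega))
    have hstep := depth_succ w (j-1) (by omega)
    rw [Nat.sub_add_cancel hj1] at hstep
    cases hcase : w.getD (j-1) E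
    · exfalso
      rw [hcase] at hstep; simp at hstep
      have heq : depth w (j-1) = depth w k := by omega
      have : isMaxDepth w (j-1) = true :=
        isMaxDepth_iff.mpr (fun i hi => heq ▸ hmax i (hlen ▸ hi))
      have hf := firstDeep_min w (show j - 1 < k by omega)
      rw [this] at hf; exact absurd hf (by simp)
    · exact absurd hcase hne
    · rfl
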